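/- arXiv:1602.04353 — 5 statements merged into one kernel-verified Lean document; each statement's English description precedes it below -/
import Mathlib

section
/- Let 𝔸 be a relational structure on a set A whose automorphisms are dense in its endomorphisms. If Pol(𝔸) contains a pseudo-Siggers operation, then for all c₁, …, cₙ ∈ A the stabilizer clone Pol(𝔸, c₁, …, cₙ) contains a pseudo-Siggers operation; that is, there exist a 6-ary s and unary α, β, all belonging to Pol(𝔸, c₁, …, cₙ), such that α(s(x,y,x,z,y,z)) = β(s(y,x,z,x,z,y)) for all x, y, z ∈ A. -/
/-- A relational structure on a set `A`: a family of finitary relations on `A`. -/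
structure RelStruct (A : Type) : Type 1 where
  ι : Type
  arity : ι → ℕ
  rel : ∀ i : ι, Set (Fin (arity i) → A)

/-- An `n`-ary operation `f` preserves the `m`-ary relation `S`. -/
def Preserves {A : Type} {n m : ℕ} (f : (Fin n → A) → A) (S : Set (Fin m → A)) : Prop :=
  ∀ t : Fin n → Fin m → A, (∀ j, t j ∈ S) → (fun k => f (fun j => t j k)) ∈ S

/-- `f` is a polymorphism of `𝔸`: it preserves every relation of `𝔸`. -/
def IsPolymorphism {A : Type} (𝔸 : RelStruct A) {n : ℕ} (f : (Fin n → A) → A) : Prop :=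
  ∀ i, Preserves f (𝔸.rel i)

/-- The polymorphism clone of `𝔸`, arity by arity. -/
def Pol {A : Type} (𝔸 : RelStruct A) : ∀ n : ℕ, Set ((Fin n → A) → A) :=
  fun _ => {f | IsPolymorphism 𝔸 f}

/-- The stabilizer `Pol(𝔸, c₁, …, cₙ)` of the polymorphism clone by the constants
listed in `c`. -/
def PolStab {A : Type} (𝔸 : RelStruct A) (c : List A) : ∀ n : ℕ, Set ((Fin n → A) → A) :=
  fun _ => {f | IsPolymorphism 𝔸 f ∧ ∀ a ∈ c, f (fun _ => a) = a}

/-- `e` is an endomorphism of `𝔸`. -/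
def IsEndo {A : Type} (𝔸 : RelStruct A) (e : A → A) : Prop :=
  ∀ i, ∀ t ∈ 𝔸.rel i, (fun j => e (t j)) ∈ 𝔸.rel i

/-- `α` is an automorphism of `𝔸`: a bijective endomorphism whose inverse is an
endomorphism. -/
def IsAuto {A : Type} (𝔸 : RelStruct A) (α : Equiv.Perm A) : Prop :=
  IsEndo 𝔸 ⇑α ∧ IsEndo 𝔸 ⇑α.symm

/-- `𝔸` is a core: its automorphisms are dense in its endomorphisms. -/
def IsCore {A : Type} (𝔸 : RelStruct A) : Prop :=
  ∀ e : A → A, IsEndo 𝔸 e → ∀ S : Finset A,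
    ∃ α : Equiv.Perm A, IsAuto 𝔸 α ∧ ∀ a ∈ S, α a = e a

/-- The automorphism group of `𝔸` is oligomorphic: for every `k` there are finitely
many orbits on `k`-tuples, i.e. a finite set of tuples meeting every orbit. -/
def AutOligomorphic {A : Type} (𝔸 : RelStruct A) : Prop :=
  ∀ k : ℕ, ∃ S : Finset (Fin k → A), ∀ t : Fin k → A,
    ∃ t' ∈ S, ∃ α : Equiv.Perm A, IsAuto 𝔸 α ∧ ∀ i, α (t' i) = t i

/-- `C` is a function clone: it contains the projections and is closed under composition. -/
structure IsClone {X : Type} (C : ∀ n : ℕ, Set ((Fin n → X) → X)) : Prop where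
  proj : ∀ (n : ℕ) (i : Fin n), (fun x : Fin n → X => x i) ∈ C n
  comp : ∀ {n m : ℕ} (f : (Fin n → X) → X) (g : Fin n → (Fin m → X) → X),
    f ∈ C n → (∀ i, g i ∈ C m) → (fun x => f (fun i => g i x)) ∈ C m

/-- `C` is topologically closed: any operation agreeing with members of `C` on every
finite set belongs to `C`. -/
def CloneClosed {X : Type} (C : ∀ n : ℕ, Set ((Fin n → X) → X)) : Prop :=
  ∀ (n : ℕ) (f : (Fin n → X) → X),
    (∀ F : Finset (Fin n → X), ∃ g ∈ C n, ∀ t ∈ F, g t = f t) → f ∈ C n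

/-- The permutation `g` belongs to the group of the clone `C`: both `g` and its inverse
are (unary) members of `C`. -/
def InGroupOf {X : Type} (C : ∀ n : ℕ, Set ((Fin n → X) → X)) (g : Equiv.Perm X) : Prop :=
  (fun x : Fin 1 → X => g (x 0)) ∈ C 1 ∧ (fun x : Fin 1 → X => g.symm (x 0)) ∈ C 1

/-- The clone `C` is oligomorphic: its group has finitely many orbits on `k`-tuples
for every `k`. -/
def CloneOligomorphic {X : Type} (C : ∀ n : ℕ, Set ((Fin n → X) → X)) : Prop :=
  ∀ k : ℕ, ∃ S : Finset (Fin k → X), ∀ t : Fin k → X,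
    ∃ t' ∈ S, ∃ g : Equiv.Perm X, InGroupOf C g ∧ ∀ i, g (t' i) = t i

/-- `C` contains a pseudo-Siggers operation: a 6-ary `s` and unary `α, β`, all in `C`,
with `α s(x,y,x,z,y,z) ≈ β s(y,x,z,x,z,y)`. -/
def HasPseudoSiggers {X : Type} (C : ∀ n : ℕ, Set ((Fin n → X) → X)) : Prop :=
  ∃ s ∈ C 6, ∃ α ∈ C 1, ∃ β ∈ C 1, ∀ x y z : X,
    α (fun _ => s ![x, y, x, z, y, z]) = β (fun _ => s ![y, x, z, x, z, y])

/-- `f` is a projection. -/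
def IsProjection {X : Type} {n : ℕ} (f : (Fin n → X) → X) : Prop :=
  ∃ i : Fin n, f = fun x => x i

/-- `ξ` is a clone homomorphism from `C` to the clone `P` of projections on the two-element
set: it is arity-preserving, takes values in the projections on members of `C`, sends
projections to the corresponding projections, and preserves composition. -/
structure CloneHomToProj {X : Type} (C : ∀ n : ℕ, Set ((Fin n → X) → X))
    (ξ : ∀ n : ℕ, ((Fin n → X) → X) → ((Fin n → Bool) → Bool)) : Prop where
  maps_to_proj : ∀ (n : ℕ), ∀ f ∈ C n, IsProjection (ξ n f)
  map_proj : ∀ (n : ℕ) (i : Fin n), ξ n (fun x => x i) = fun x => x i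
  map_comp : ∀ {n m : ℕ} (f : (Fin n → X) → X) (g : Fin n → (Fin m → X) → X),
    f ∈ C n → (∀ i, g i ∈ C m) →
    ξ m (fun x => f (fun i => g i x)) = fun x => ξ n f (fun i => ξ m (g i) x)

/-- `ξ` is continuous on `C` (w.r.t. the topology of pointwise convergence):
its value at `f ∈ C` is determined by the restriction of `f` to some finite set. -/
def CloneHomCont {X : Type} (C : ∀ n : ℕ, Set ((Fin n → X) → X))
    (ξ : ∀ n : ℕ, ((Fin n → X) → X) → ((Fin n → Bool) → Bool)) : Prop :=
  ∀ (n : ℕ), ∀ f ∈ C n, ∃ F : Finset (Fin n → X),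
    ∀ g ∈ C n, (∀ t ∈ F, g t = f t) → ξ n g = ξ n f

/-- Primitive positive formulas with `k` free variables, over a relational signature with
relation symbols `ι` of arities `ar`, and with parameters from `P`: atoms are equalities
and relations applied to variables or parameters, combined by conjunction and existential
quantification. -/
inductive PP (ι : Type) (ar : ι → ℕ) (P : Type) : ℕ → Type where
  | eq : ∀ {k : ℕ}, (Fin k ⊕ P) → (Fin k ⊕ P) → PP ι ar P k
  | rel : ∀ {k : ℕ} (i : ι), (Fin (ar i) → (Fin k ⊕ P)) → PP ι ar P k
  | and : ∀ {k : ℕ}, PP ι ar P k → PP ι ar P k → PP ι ar P k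
  | ex : ∀ {k : ℕ}, PP ι ar P (k + 1) → PP ι ar P k

/-- Satisfaction of a pp-formula under the valuation `v` of the free variables, where the
relation symbols are interpreted by `rels` and the parameters by `par`. -/
def PP.Sat {A ι P : Type} {ar : ι → ℕ} (rels : ∀ i, Set (Fin (ar i) → A)) (par : P → A) :
    {k : ℕ} → PP ι ar P k → (Fin k → A) → Prop
  | _, .eq x y, v => Sum.elim v par x = Sum.elim v par y
  | _, .rel i t, v => (fun j => Sum.elim v par (t j)) ∈ rels i
  | _, .and φ ψ, v => PP.Sat rels par φ v ∧ PP.Sat rels par ψ v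
  | _, .ex φ, v => ∃ a : A, PP.Sat rels par φ (Fin.snoc v a)

/-- The `m`-ary relation `S` is definable in `𝔸` by a pp-formula whose parameters are
interpreted via `par`. -/
def PPDefinable {A : Type} (𝔸 : RelStruct A) {P : Type} (par : P → A) {m : ℕ}
    (S : Set (Fin m → A)) : Prop :=
  ∃ φ : PP 𝔸.ι 𝔸.arity P m, S = {v | PP.Sat 𝔸.rel par φ v}

/-- `S` is pp-definable in `𝔸` with parameters (arbitrary elements of the domain). -/
def PPDefWithParams {A : Type} (𝔸 : RelStruct A) {m : ℕ} (S : Set (Fin m → A)) : Prop :=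
  PPDefinable 𝔸 (id : A → A) S

/-- `S` is pp-definable in `𝔸` without parameters. -/
def PPDefNoParams {A : Type} (𝔸 : RelStruct A) {m : ℕ} (S : Set (Fin m → A)) : Prop :=
  PPDefinable 𝔸 (fun e : Empty => e.elim) S

/-- Reading a `(k·n)`-tuple as a `k`-tuple of `n`-tuples. -/
def unflatten {A : Type} {k n : ℕ} (w : Fin (k * n) → A) : Fin k → Fin n → A :=
  fun j i => w (finProdFinEquiv (j, i))

/-- `𝔸` pp-interprets `𝔹` with parameters: there are `n ≥ 1` and a surjective partial map
`h` from `Aⁿ` onto `B` (with domain `dom`) such that `dom`, the `h`-preimage of equality,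
and the `h`-preimage of every relation of `𝔹` are pp-definable with parameters in `𝔸`. -/
def PPInterpretsWithParams {A B : Type} (𝔸 : RelStruct A) (𝔹 : RelStruct B) : Prop :=
  ∃ n : ℕ, 1 ≤ n ∧ ∃ (dom : Set (Fin n → A)) (h : (Fin n → A) → B),
    (∀ b : B, ∃ t ∈ dom, h t = b) ∧
    PPDefWithParams 𝔸 dom ∧
    PPDefWithParams 𝔸 {w : Fin (2 * n) → A |
      unflatten w 0 ∈ dom ∧ unflatten w 1 ∈ dom ∧ h (unflatten w 0) = h (unflatten w 1)} ∧
    ∀ i : 𝔹.ι, PPDefWithParams 𝔸 {w : Fin (𝔹.arity i * n) → A |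
      (∀ j, unflatten w j ∈ dom) ∧ (fun j => h (unflatten w j)) ∈ 𝔹.rel i}

/-- The structure `K₃ = ({1,2,3}; ≠)`. -/
def K3 : RelStruct (Fin 3) where
  ι := Unit
  arity := fun _ => 2
  rel := fun _ => {v | v 0 ≠ v 1}

/-- The permutation group `G` is oligomorphic. -/
def GroupOligomorphic {X : Type} (G : Subgroup (Equiv.Perm X)) : Prop :=
  ∀ k : ℕ, ∃ S : Finset (Fin k → X), ∀ t : Fin k → X,
    ∃ t' ∈ S, ∃ α ∈ G, ∀ i, α (t' i) = t i

/-- The orbit of `x` under `G`. -/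
def orbitOf {X : Type} (G : Subgroup (Equiv.Perm X)) (x : X) : Set X :=
  {y | ∃ α ∈ G, α x = y}

/-- The binary relation `R` is invariant under `G`. -/
def GGInvariant {X : Type} (R : X → X → Prop) (G : Subgroup (Equiv.Perm X)) : Prop :=
  ∀ α ∈ G, ∀ x y, R x y → R (α x) (α y)

/-- The relational structure associated with a gg-system `(R, G)`: its relations are `R`
together with all orbits of the componentwise action of `G` on finite tuples. -/
def ggStruct {X : Type} (R : X → X → Prop) (G : Subgroup (Equiv.Perm X)) : RelStruct X where
  ι := Unit ⊕ (Σ k : ℕ, Fin k → X)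
  arity := Sum.elim (fun _ => 2) (fun p => p.1)
  rel := fun i => match i with
    | Sum.inl _ => {v : Fin 2 → X | R (v 0) (v 1)}
    | Sum.inr p => {v : Fin p.1 → X | ∃ α ∈ G, ∀ j, α (p.2 j) = v j}

/-- `a, b, c` induce a `K₃` in `R`: pairwise distinct and pairwise related. -/
def Triangle {X : Type} (R : X → X → Prop) (a b c : X) : Prop :=
  a ≠ b ∧ a ≠ c ∧ b ≠ c ∧ R a b ∧ R a c ∧ R b c

/-- The graph `(X; R)` contains a `K₃`. -/
def ContainsK3 {X : Type} (R : X → X → Prop) : Prop :=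
  ∃ a b c, Triangle R a b c

/-- The gg-system `(R, G)` has a pseudoloop: an edge `(a, α(a))` with `α ∈ G`. -/
def HasPseudoloop {X : Type} (R : X → X → Prop) (G : Subgroup (Equiv.Perm X)) : Prop :=
  ∃ a, ∃ α ∈ G, R a (α a)

/-- The support of `R`: elements contained in an edge. -/
def Support {X : Type} (R : X → X → Prop) : Set X :=
  {x | ∃ y, R x y}

/-- The number of `G`-orbits contained in the support of `R`. -/
noncomputable def supportOrbitCount {X : Type} (R : X → X → Prop)
    (G : Subgroup (Equiv.Perm X)) : ℕ :=
  Nat.card ↥(orbitOf G '' Support R)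

/-- Minimality of a pseudoloop-free gg-system `(R, G)` containing a `K₃`: it does not
pp-define a symmetric relation `R'` giving a pseudoloop-free gg-system containing a `K₃`
whose support consists of strictly fewer orbits. -/
def ggMinimal {X : Type} (R : X → X → Prop) (G : Subgroup (Equiv.Perm X)) : Prop :=
  ¬ ∃ R' : X → X → Prop,
      PPDefNoParams (ggStruct R G) {v : Fin 2 → X | R' (v 0) (v 1)} ∧
      (∀ x y, R' x y → R' y x) ∧ GGInvariant R' G ∧
      ContainsK3 R' ∧ ¬ HasPseudoloop R' G ∧
      supportOrbitCount R' G < supportOrbitCount R G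

/-- `x` and `y` are `n`-diamond-connected with respect to `R`. -/
def DiamondConn {X : Type} (R : X → X → Prop) (n : ℕ) (x y : X) : Prop :=
  ∃ a b c d : ℕ → X,
    (∀ i < n, Triangle R (a i) (b i) (c i) ∧ Triangle R (b i) (c i) (d i)) ∧
    a 0 = x ∧ (∀ i, i + 1 < n → d i = a (i + 1)) ∧ d (n - 1) = y

/-- If the automorphisms of `𝔸` are dense in its endomorphisms and
`Pol(𝔸)` contains a pseudo-Siggers operation, then so does every stabilizer
`Pol(𝔸, c₁, …, cₙ)`. -/
theorem statement1 {A : Type} (𝔸 : RelStruct A) (hCore : IsCore 𝔸)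
    (hPS : HasPseudoSiggers (Pol 𝔸)) :
    ∀ c : List A, HasPseudoSiggers (PolStab 𝔸 c) := by
  classical
  intro c
  obtain ⟨s, hs, α, hα, β, hβ, heq⟩ := hPS
  -- the diagonal endomorphism e(a) = s(a,…,a)
  have hsEndo : IsEndo 𝔸 (fun a => s (fun _ => a)) := by
    intro i t ht
    exact hs i (fun _ => t) (fun _ => ht)
  -- any unary polymorphism gives an endomorphism
  have unaryEndo : ∀ u : (Fin 1 → A) → A, IsPolymorphism 𝔸 u →
      IsEndo 𝔸 (fun a => u (fun _ => a)) := by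
    intro u hu i t ht
    exact hu i (fun _ => t) (fun _ => ht)
  -- γ : automorphism agreeing with e on the constants
  obtain ⟨γ, hγAuto, hγeq⟩ := hCore (fun a => s (fun _ => a)) hsEndo c.toFinset
  -- the endomorphism a ↦ α (γ a)
  have hα₁ : IsEndo 𝔸 (fun a => α (fun _ => γ a)) := by
    intro i t ht
    have h1 : (fun j => γ (t j)) ∈ 𝔸.rel i := hγAuto.1 i t ht
    exact hα i (fun _ => fun j => γ (t j)) (fun _ => h1)
  obtain ⟨δ, hδAuto, hδeq⟩ := hCore (fun a => α (fun _ => γ a)) hα₁ c.toFinset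
  -- the key fact: ![a,a,a,a,a,a] is constant
  have hconst : ∀ a : A, (![a, a, a, a, a, a] : Fin 6 → A) = fun _ => a := by
    intro a; funext j; fin_cases j <;> rfl
  -- α and β agree on γ a = e a for a ∈ c
  have hαβ : ∀ a ∈ c, α (fun _ => γ a) = β (fun _ => γ a) := by
    intro a ha
    have h1 := heq a a a
    rw [hconst a] at h1
    have h2 : γ a = s (fun _ => a) := hγeq a (List.mem_toFinset.mpr ha)
    rw [h2]
    exact h1
  refine ⟨fun v => γ.symm (s v), ⟨?_, ?_⟩,
    fun x => δ.symm (α (fun _ => γ (x 0))), ⟨?_, ?_⟩,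
    fun x => δ.symm (β (fun _ => γ (x 0))), ⟨?_, ?_⟩, ?_⟩
  · -- s' is a polymorphism
    intro i t ht
    exact hγAuto.2 i _ (hs i t ht)
  · -- s' fixes the constants
    intro a ha
    have h2 : γ a = s (fun _ => a) := hγeq a (List.mem_toFinset.mpr ha)
    show γ.symm (s fun _ => a) = a
    rw [← h2, Equiv.symm_apply_apply]
  · -- α' is a polymorphism
    intro i t ht
    have h1 : (fun j => γ (t 0 j)) ∈ 𝔸.rel i := hγAuto.1 i (t 0) (ht 0)
    have h2 := hα i (fun _ => fun j => γ (t 0 j)) (fun _ => h1)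
    exact hδAuto.2 i _ h2
  · -- α' fixes the constants
    intro a ha
    show δ.symm (α fun _ => γ a) = a
    rw [← hδeq a (List.mem_toFinset.mpr ha), Equiv.symm_apply_apply]
  · -- β' is a polymorphism
    intro i t ht
    have h1 : (fun j => γ (t 0 j)) ∈ 𝔸.rel i := hγAuto.1 i (t 0) (ht 0)
    have h2 := hβ i (fun _ => fun j => γ (t 0 j)) (fun _ => h1)
    exact hδAuto.2 i _ h2
  · -- β' fixes the constants
    intro a ha
    show δ.symm (β fun _ => γ a) = a
    rw [← hαβ a ha, ← hδeq a (List.mem_toFinset.mpr ha), Equiv.symm_apply_apply]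
  · -- the pseudo-Siggers identity
    intro x y z
    show δ.symm (α fun _ => γ (γ.symm (s ![x, y, x, z, y, z])))
        = δ.symm (β fun _ => γ (γ.symm (s ![y, x, z, x, z, y])))
    simp only [Equiv.apply_symm_apply]
    exact congrArg δ.symm (heq x y z)
end

section
/- Let C be a topologically closed oligomorphic function clone on a countable set X. If C has local pseudo-Siggers operations — that is, for every finite subset A ⊆ X there exist a 6-ary s ∈ C and unary α, β ∈ C such that α(s(x,y,x,z,y,z)) = β(s(y,x,z,x,z,y)) for all x, y, z ∈ A — then C has a pseudo-Siggers operation: there exist a 6-ary s ∈ C and unary α, β ∈ C with α(s(x,y,x,z,y,z)) = β(s(y,x,z,x,z,y)) for all x, y, z ∈ X. -/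
open CategoryTheory in
lemma koenig (N : ℕ → Type) (hfin : ∀ n, Finite (N n)) (hne : ∀ n, Nonempty (N n))
    (π : ∀ n, N (n + 1) → N n) : ∃ b : ∀ n, N n, ∀ n, π n (b (n + 1)) = b n := by
  haveI : ∀ j : ℕᵒᵖ, Finite ((Functor.ofOpSequence (X := N) (fun n => TypeCat.ofHom (π n))).obj j) := fun j => hfin j.unop
  haveI : ∀ j : ℕᵒᵖ, Nonempty ((Functor.ofOpSequence (X := N) (fun n => TypeCat.ofHom (π n))).obj j) := fun j => hne j.unop
  obtain ⟨u, hu⟩ := nonempty_sections_of_finite_inverse_system (Functor.ofOpSequence (X := N) (fun n => TypeCat.ofHom (π n)))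
  refine ⟨fun n => u (Opposite.op n), fun n => ?_⟩
  have h := hu ((homOfLE (Nat.le_add_right n 1)).op)
  rw [Functor.ofOpSequence_map_homOfLE_succ] at h
  exact h

lemma clone_compactness {X : Type} (C : ∀ n : ℕ, Set ((Fin n → X) → X))
    (hOlig : CloneOligomorphic C)
    (hGtrans : ∀ g h : Equiv.Perm X, InGroupOf C g → InGroupOf C h → InGroupOf C (g.trans h))
    (hGsymm : ∀ g : Equiv.Perm X, InGroupOf C g → InGroupOf C g.symm)
    (hGone : InGroupOf C (Equiv.refl X))
    {D : Type} (E : ℕ → Finset D) (hEmono : ∀ n, E n ⊆ E (n + 1))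
    (Q : ℕ → (D → X) → Prop)
    (hQmono : ∀ n f, Q (n + 1) f → Q n f)
    (hQinv : ∀ n (f : D → X) (g : Equiv.Perm X), InGroupOf C g → Q n f → Q n (fun d => g (f d)))
    (hQne : ∀ n, ∃ f, Q n f) :
    ∃ fstar : D → X, ∀ n, ∃ f, Q n f ∧ ∀ d ∈ E n, f d = fstar d := by
  classical
  set m := fun n => (E n).card with hm
  let en : ∀ n, Fin (m n) → D := fun n i => ((E n).equivFin.symm i : D)
  have hen_surj : ∀ n, ∀ d ∈ E n, ∃ i, en n i = d := by
    intro n d hd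
    exact ⟨(E n).equivFin ⟨d, hd⟩, by simp [en]⟩
  choose S hS using hOlig
  let Node : ℕ → Type := fun n =>
    {t : Fin (m n) → X // t ∈ S (m n) ∧
      ∃ f, Q n f ∧ ∃ g : Equiv.Perm X, InGroupOf C g ∧ ∀ i, g (t i) = f (en n i)}
  have hNfin : ∀ n, Finite (Node n) :=
    fun n => Finite.of_injective (fun x : Node n => (⟨x.1, x.2.1⟩ : {t // t ∈ S (m n)}))
      (fun a b hab => Subtype.ext (by simpa using congrArg Subtype.val hab))
  have hNne : ∀ n, Nonempty (Node n) := by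
    intro n
    obtain ⟨f, hf⟩ := hQne n
    obtain ⟨t', ht', g, hg, hgt⟩ := hS (m n) (fun i => f (en n i))
    exact ⟨⟨t', ht', f, hf, g, hg, hgt⟩⟩
  have hπ : ∀ n (x : Node (n + 1)), ∃ y : Node n, ∃ g : Equiv.Perm X,
      InGroupOf C g ∧ ∀ i, g (y.1 i) = x.2.2.choose (en n i) := by
    intro n x
    have hf := x.2.2.choose_spec
    obtain ⟨t', ht', g, hg, hgt⟩ := hS (m n) (fun i => x.2.2.choose (en n i))
    exact ⟨⟨t', ht', x.2.2.choose, hQmono n _ hf.1, g, hg, hgt⟩, g, hg, hgt⟩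
  obtain ⟨b, hb⟩ := koenig Node hNfin hNne (fun n x => (hπ n x).choose)
  let f_ : ℕ → D → X := fun n => (b n).2.2.choose
  have hf_Q : ∀ n, Q n (f_ n) := fun n => (b n).2.2.choose_spec.1
  have hf_g : ∀ n, ∃ g : Equiv.Perm X, InGroupOf C g ∧ ∀ i, g ((b n).1 i) = f_ n (en n i) :=
    fun n => (b n).2.2.choose_spec.2
  have hrel : ∀ n, ∃ k : Equiv.Perm X, InGroupOf C k ∧ ∀ d ∈ E n, f_ (n + 1) d = k (f_ n d) := by
    intro n
    obtain ⟨g, hg, hgt⟩ := (hπ n (b (n + 1))).choose_spec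
    rw [show (hπ n (b (n + 1))).choose = b n from hb n] at hgt
    obtain ⟨g', hg', hgt'⟩ := hf_g n
    refine ⟨g'.symm.trans g, hGtrans _ _ (hGsymm _ hg') hg, ?_⟩
    intro d hd
    obtain ⟨i, rfl⟩ := hen_surj n d hd
    have h1 : g ((b n).1 i) = f_ (n + 1) (en n i) := hgt i
    have h2 : g' ((b n).1 i) = f_ n (en n i) := hgt' i
    rw [← h1, ← h2, Equiv.trans_apply, Equiv.symm_apply_apply]
  choose k hk hkrel using hrel
  let h : ℕ → Equiv.Perm X := fun n => Nat.rec (Equiv.refl X) (fun n hn => (k n).symm.trans hn) n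
  have hhG : ∀ n, InGroupOf C (h n) := by
    intro n
    induction n with
    | zero => exact hGone
    | succ n ih => exact hGtrans _ _ (hGsymm _ (hk n)) ih
  let F : ℕ → D → X := fun n d => h n (f_ n d)
  have hFQ : ∀ n, Q n (F n) := fun n => hQinv n (f_ n) (h n) (hhG n) (hf_Q n)
  have hFstep : ∀ n, ∀ d ∈ E n, F (n + 1) d = F n d := by
    intro n d hd
    show h (n + 1) (f_ (n + 1) d) = h n (f_ n d)
    rw [hkrel n d hd]
    show ((k n).symm.trans (h n)) (k n (f_ n d)) = h n (f_ n d)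
    rw [Equiv.trans_apply, Equiv.symm_apply_apply]
  have hEle : ∀ n n', n ≤ n' → E n ⊆ E n' := by
    intro n n' hle
    induction n', hle using Nat.le_induction with
    | base => exact fun _ hx => hx
    | succ p hp ih => exact fun x hx => hEmono p (ih hx)
  have hFle : ∀ n n', n ≤ n' → ∀ d ∈ E n, F n' d = F n d := by
    intro n n' hle
    induction n', hle using Nat.le_induction with
    | base => exact fun d _ => rfl
    | succ p hp ih =>
      intro d hd
      rw [hFstep p d (hEle n p hp hd), ih d hd]
  refine ⟨fun d => if hcov : ∃ n', d ∈ E n' then F hcov.choose d else F 0 d, ?_⟩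
  intro n
  refine ⟨F n, hFQ n, ?_⟩
  intro d hd
  have hcov : ∃ n', d ∈ E n' := ⟨n, hd⟩
  show F n d = dite (∃ n', d ∈ E n') (fun hcov => F hcov.choose d) (fun _ => F 0 d)
  rw [dif_pos hcov]
  rcases le_total n hcov.choose with hle | hle
  · exact (hFle n hcov.choose hle d hd).symm
  · exact hFle hcov.choose n hle d hcov.choose_spec


lemma comp1_mem {X : Type} {C : ∀ n : ℕ, Set ((Fin n → X) → X)} (hClone : IsClone C)
    {n : ℕ} {v : (Fin 1 → X) → X} {s : (Fin n → X) → X}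
    (hv : v ∈ C 1) (hs : s ∈ C n) : (fun x : Fin n → X => v (fun _ => s x)) ∈ C n :=
  hClone.comp v (fun _ => s) hv (fun _ => hs)

lemma inGroup_refl {X : Type} {C : ∀ n : ℕ, Set ((Fin n → X) → X)} (hClone : IsClone C) :
    InGroupOf C (Equiv.refl X) :=
  ⟨hClone.proj 1 0, hClone.proj 1 0⟩

lemma inGroup_symm {X : Type} {C : ∀ n : ℕ, Set ((Fin n → X) → X)} {g : Equiv.Perm X}
    (hg : InGroupOf C g) : InGroupOf C g.symm :=
  ⟨hg.2, by simpa using hg.1⟩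

lemma inGroup_trans {X : Type} {C : ∀ n : ℕ, Set ((Fin n → X) → X)} (hClone : IsClone C)
    {g h : Equiv.Perm X} (hg : InGroupOf C g) (hh : InGroupOf C h) :
    InGroupOf C (g.trans h) := by
  constructor
  · have := comp1_mem hClone hh.1 hg.1
    simpa [Equiv.trans_apply] using this
  · have := comp1_mem hClone hg.2 hh.2
    simpa [Equiv.symm_trans_apply] using this

lemma finset_cover {D : Type} (E : ℕ → Finset D) (hEmono : ∀ n, E n ⊆ E (n + 1))
    (hEcov : ∀ d, ∃ n, d ∈ E n) (F : Finset D) : ∃ n, ∀ d ∈ F, d ∈ E n := by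
  classical
  have hEle : ∀ n n', n ≤ n' → E n ⊆ E n' := by
    intro n n' hle
    induction n', hle using Nat.le_induction with
    | base => exact fun _ hx => hx
    | succ p hp ih => exact fun x hx => hEmono p (ih hx)
  induction F using Finset.induction_on with
  | empty => exact ⟨0, fun d hd => absurd hd (Finset.notMem_empty d)⟩
  | @insert a s ha ih =>
    obtain ⟨n1, hn1⟩ := ih
    obtain ⟨n2, hn2⟩ := hEcov a
    refine ⟨max n1 n2, fun d hd => ?_⟩
    rcases Finset.mem_insert.mp hd with rfl | hd
    · exact hEle n2 _ (le_max_right n1 n2) hn2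
    · exact hEle n1 _ (le_max_left n1 n2) (hn1 d hd)

/-- A topologically closed oligomorphic function clone on a countable set
which has local pseudo-Siggers operations has a pseudo-Siggers operation. -/
theorem statement3 {X : Type} [Countable X] (C : ∀ n : ℕ, Set ((Fin n → X) → X))
    (hClone : IsClone C) (hClosed : CloneClosed C) (hOlig : CloneOligomorphic C)
    (hLocal : ∀ A : Finset X, ∃ s ∈ C 6, ∃ α ∈ C 1, ∃ β ∈ C 1,
      ∀ x ∈ A, ∀ y ∈ A, ∀ z ∈ A,
        α (fun _ => s ![x, y, x, z, y, z]) = β (fun _ => s ![y, x, z, x, z, y])) :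
    HasPseudoSiggers C := by
  classical
  cases isEmpty_or_nonempty X with
  | inl hempty =>
    exact ⟨fun x => x 0, hClone.proj 6 0, fun x => x 0, hClone.proj 1 0, fun x => x 0,
      hClone.proj 1 0, fun x => hempty.elim x⟩
  | inr hnX =>
    obtain ⟨u, hu⟩ := exists_surjective_nat X
    obtain ⟨d6, hd6⟩ := exists_surjective_nat (Fin 6 → X)
    obtain ⟨dp, hdp⟩ := exists_surjective_nat (Bool × X)
    have hGtrans : ∀ g h : Equiv.Perm X, InGroupOf C g → InGroupOf C h →
        InGroupOf C (g.trans h) := fun _ _ hg hh => inGroup_trans hClone hg hh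
    have hGsymm : ∀ g : Equiv.Perm X, InGroupOf C g → InGroupOf C g.symm :=
      fun _ hg => inGroup_symm hg
    have hGone := inGroup_refl (C := C) hClone
    let A : ℕ → Finset X := fun n => (Finset.range (n + 1)).image u
    have hAmono : ∀ n, A n ⊆ A (n + 1) :=
      fun n => Finset.image_subset_image (Finset.range_subset_range.mpr (by omega))
    have hAle : ∀ n n', n ≤ n' → A n ⊆ A n' := by
      intro n n' hle
      induction n', hle using Nat.le_induction with
      | base => exact fun _ hx => hx
      | succ p hp ih => exact fun x hx => hAmono p (ih hx)
    have hAcov : ∀ x : X, ∃ n, x ∈ A n := by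
      intro x
      obtain ⟨i, rfl⟩ := hu x
      exact ⟨i, Finset.mem_image.mpr ⟨i, Finset.mem_range.mpr (by omega), rfl⟩⟩
    let σf : X × X × X → (Fin 6 → X) := fun p => ![p.1, p.2.1, p.1, p.2.2, p.2.1, p.2.2]
    let τf : X × X × X → (Fin 6 → X) := fun p => ![p.2.1, p.1, p.2.2, p.1, p.2.2, p.2.1]
    -- Pass 1: limit 6-ary operation
    let E1 : ℕ → Finset (Fin 6 → X) := fun n =>
      ((A n ×ˢ A n ×ˢ A n).image σf ∪ (A n ×ˢ A n ×ˢ A n).image τf) ∪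
        (Finset.range (n + 1)).image d6
    have hprodmono : ∀ n, A n ×ˢ A n ×ˢ A n ⊆ A (n + 1) ×ˢ A (n + 1) ×ˢ A (n + 1) :=
      fun n => Finset.product_subset_product (hAmono n)
        (Finset.product_subset_product (hAmono n) (hAmono n))
    have hE1mono : ∀ n, E1 n ⊆ E1 (n + 1) := fun n =>
      Finset.union_subset_union
        (Finset.union_subset_union (Finset.image_subset_image (hprodmono n))
          (Finset.image_subset_image (hprodmono n)))
        (Finset.image_subset_image (Finset.range_subset_range.mpr (by omega)))
    have hE1cov : ∀ t : Fin 6 → X, ∃ n, t ∈ E1 n := by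
      intro t
      obtain ⟨i, rfl⟩ := hd6 t
      exact ⟨i, Finset.mem_union_right _
        (Finset.mem_image.mpr ⟨i, Finset.mem_range.mpr (by omega), rfl⟩)⟩
    have hmemσ : ∀ n x y z, x ∈ A n → y ∈ A n → z ∈ A n → σf (x, y, z) ∈ E1 n := by
      intro n x y z hx hy hz
      exact Finset.mem_union_left _ (Finset.mem_union_left _
        (Finset.mem_image.mpr ⟨(x, y, z),
          Finset.mem_product.mpr ⟨hx, Finset.mem_product.mpr ⟨hy, hz⟩⟩, rfl⟩))
    have hmemτ : ∀ n x y z, x ∈ A n → y ∈ A n → z ∈ A n → τf (x, y, z) ∈ E1 n := by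
      intro n x y z hx hy hz
      exact Finset.mem_union_left _ (Finset.mem_union_right _
        (Finset.mem_image.mpr ⟨(x, y, z),
          Finset.mem_product.mpr ⟨hx, Finset.mem_product.mpr ⟨hy, hz⟩⟩, rfl⟩))
    let Q1 : ℕ → ((Fin 6 → X) → X) → Prop := fun n s =>
      s ∈ C 6 ∧ ∃ α ∈ C 1, ∃ β ∈ C 1, ∀ x ∈ A n, ∀ y ∈ A n, ∀ z ∈ A n,
        α (fun _ => s (σf (x, y, z))) = β (fun _ => s (τf (x, y, z)))
    have hQ1mono : ∀ n s, Q1 (n + 1) s → Q1 n s := by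
      rintro n s ⟨hsC, α, hα, β, hβ, hid⟩
      exact ⟨hsC, α, hα, β, hβ, fun x hx y hy z hz =>
        hid x (hAmono n hx) y (hAmono n hy) z (hAmono n hz)⟩
    have hQ1inv : ∀ n (s : (Fin 6 → X) → X) (g : Equiv.Perm X),
        InGroupOf C g → Q1 n s → Q1 n (fun t => g (s t)) := by
      rintro n s g hg ⟨hsC, α, hα, β, hβ, hid⟩
      refine ⟨comp1_mem hClone hg.1 hsC,
        (fun v : Fin 1 → X => α (fun _ => g.symm (v 0))), comp1_mem hClone hα hg.2,
        (fun v : Fin 1 → X => β (fun _ => g.symm (v 0))), comp1_mem hClone hβ hg.2, ?_⟩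
      intro x hx y hy z hz
      simp only [Equiv.symm_apply_apply]
      exact hid x hx y hy z hz
    have hQ1ne : ∀ n, ∃ s, Q1 n s := by
      intro n
      obtain ⟨s, hs, α, hα, β, hβ, hid⟩ := hLocal (A n)
      exact ⟨s, hs, α, hα, β, hβ, fun x hx y hy z hz => hid x hx y hy z hz⟩
    obtain ⟨s0, hpass1⟩ := clone_compactness C hOlig hGtrans hGsymm hGone E1 hE1mono
      Q1 hQ1mono hQ1inv hQ1ne
    have hs0 : s0 ∈ C 6 := by
      apply hClosed 6
      intro Fs
      obtain ⟨n, hn⟩ := finset_cover E1 hE1mono hE1cov Fs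
      obtain ⟨s', hs', hagree⟩ := hpass1 n
      exact ⟨s', hs'.1, fun t ht => hagree t (hn t ht)⟩
    -- Pass 2: limit unary pair
    let E2 : ℕ → Finset (Bool × X) := fun n =>
      ((A n ×ˢ A n ×ˢ A n).image (fun p => (true, s0 (σf p))) ∪
        (A n ×ˢ A n ×ˢ A n).image (fun p => (false, s0 (τf p)))) ∪
        (Finset.range (n + 1)).image dp
    have hE2mono : ∀ n, E2 n ⊆ E2 (n + 1) := fun n =>
      Finset.union_subset_union
        (Finset.union_subset_union (Finset.image_subset_image (hprodmono n))
          (Finset.image_subset_image (hprodmono n)))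
        (Finset.image_subset_image (Finset.range_subset_range.mpr (by omega)))
    have hE2cov : ∀ d : Bool × X, ∃ n, d ∈ E2 n := by
      intro t
      obtain ⟨i, rfl⟩ := hdp t
      exact ⟨i, Finset.mem_union_right _
        (Finset.mem_image.mpr ⟨i, Finset.mem_range.mpr (by omega), rfl⟩)⟩
    have hmem2σ : ∀ n x y z, x ∈ A n → y ∈ A n → z ∈ A n →
        (true, s0 (σf (x, y, z))) ∈ E2 n := by
      intro n x y z hx hy hz
      exact Finset.mem_union_left _ (Finset.mem_union_left _
        (Finset.mem_image.mpr ⟨(x, y, z),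
          Finset.mem_product.mpr ⟨hx, Finset.mem_product.mpr ⟨hy, hz⟩⟩, rfl⟩))
    have hmem2τ : ∀ n x y z, x ∈ A n → y ∈ A n → z ∈ A n →
        (false, s0 (τf (x, y, z))) ∈ E2 n := by
      intro n x y z hx hy hz
      exact Finset.mem_union_left _ (Finset.mem_union_right _
        (Finset.mem_image.mpr ⟨(x, y, z),
          Finset.mem_product.mpr ⟨hx, Finset.mem_product.mpr ⟨hy, hz⟩⟩, rfl⟩))
    let Q2 : ℕ → (Bool × X → X) → Prop := fun n p =>
      (fun v : Fin 1 → X => p (true, v 0)) ∈ C 1 ∧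
      (fun v : Fin 1 → X => p (false, v 0)) ∈ C 1 ∧
      ∀ x ∈ A n, ∀ y ∈ A n, ∀ z ∈ A n,
        p (true, s0 (σf (x, y, z))) = p (false, s0 (τf (x, y, z)))
    have hQ2mono : ∀ n p, Q2 (n + 1) p → Q2 n p := by
      rintro n p ⟨h1, h2, hid⟩
      exact ⟨h1, h2, fun x hx y hy z hz =>
        hid x (hAmono n hx) y (hAmono n hy) z (hAmono n hz)⟩
    have hQ2inv : ∀ n (p : Bool × X → X) (g : Equiv.Perm X),
        InGroupOf C g → Q2 n p → Q2 n (fun d => g (p d)) := by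
      rintro n p g hg ⟨h1, h2, hid⟩
      exact ⟨comp1_mem hClone hg.1 h1, comp1_mem hClone hg.1 h2,
        fun x hx y hy z hz => congrArg g (hid x hx y hy z hz)⟩
    have hQ2ne : ∀ n, ∃ p, Q2 n p := by
      intro n
      obtain ⟨s', hQ1s', hagree⟩ := hpass1 n
      obtain ⟨hs'C, α, hα, β, hβ, hid⟩ := hQ1s'
      refine ⟨fun d => cond d.1 (α (fun _ => d.2)) (β (fun _ => d.2)), ?_, ?_, ?_⟩
      · show (fun v : Fin 1 → X => α (fun _ => v 0)) ∈ C 1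
        have hαeq : (fun v : Fin 1 → X => α (fun _ => v 0)) = α := by
          funext v
          congr 1
          funext j
          exact congrArg v (Subsingleton.elim 0 j)
        rw [hαeq]; exact hα
      · show (fun v : Fin 1 → X => β (fun _ => v 0)) ∈ C 1
        have hβeq : (fun v : Fin 1 → X => β (fun _ => v 0)) = β := by
          funext v
          congr 1
          funext j
          exact congrArg v (Subsingleton.elim 0 j)
        rw [hβeq]; exact hβ
      · intro x hx y hy z hz
        show α (fun _ => s0 (σf (x, y, z))) = β (fun _ => s0 (τf (x, y, z)))
        rw [← hagree _ (hmemσ n x y z hx hy hz), ← hagree _ (hmemτ n x y z hx hy hz)]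
        exact hid x hx y hy z hz
    obtain ⟨p0, hpass2⟩ := clone_compactness C hOlig hGtrans hGsymm hGone E2 hE2mono
      Q2 hQ2mono hQ2inv hQ2ne
    refine ⟨s0, hs0, fun v => p0 (true, v 0), ?_, fun v => p0 (false, v 0), ?_, ?_⟩
    · apply hClosed 1
      intro Fs
      obtain ⟨n, hn⟩ := finset_cover E2 hE2mono hE2cov
        (Fs.image (fun v => ((true, v 0) : Bool × X)))
      obtain ⟨p, hp, hagree⟩ := hpass2 n
      exact ⟨fun v => p (true, v 0), hp.1,
        fun t ht => hagree _ (hn _ (Finset.mem_image_of_mem _ ht))⟩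
    · apply hClosed 1
      intro Fs
      obtain ⟨n, hn⟩ := finset_cover E2 hE2mono hE2cov
        (Fs.image (fun v => ((false, v 0) : Bool × X)))
      obtain ⟨p, hp, hagree⟩ := hpass2 n
      exact ⟨fun v => p (false, v 0), hp.2.1,
        fun t ht => hagree _ (hn _ (Finset.mem_image_of_mem _ ht))⟩
    · intro x y z
      obtain ⟨nx, hx⟩ := hAcov x
      obtain ⟨ny, hy⟩ := hAcov y
      obtain ⟨nz, hz⟩ := hAcov z
      have hx' : x ∈ A (max nx (max ny nz)) := hAle nx _ (le_max_left _ _) hx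
      have hy' : y ∈ A (max nx (max ny nz)) :=
        hAle ny _ (le_trans (le_max_left _ _) (le_max_right _ _)) hy
      have hz' : z ∈ A (max nx (max ny nz)) :=
        hAle nz _ (le_trans (le_max_right _ _) (le_max_right _ _)) hz
      obtain ⟨p, hp, hagree⟩ := hpass2 (max nx (max ny nz))
      have hid := hp.2.2 x hx' y hy' z hz'
      show p0 (true, s0 (σf (x, y, z))) = p0 (false, s0 (τf (x, y, z)))
      rw [← hagree _ (hmem2σ _ x y z hx' hy' hz'), ← hagree _ (hmem2τ _ x y z hx' hy' hz')]
      exact hid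
end

section
/- Let C be a topologically closed oligomorphic function clone on a countable set X. Suppose that for every k ≥ 1 and every symmetric binary relation R on Xᵏ such that (a) R, regarded as a 2k-ary relation on X, is preserved by every operation in C, and (b) there exist three pairwise distinct, pairwise R-related elements of Xᵏ, there exist b ∈ Xᵏ and a member α of the group of C such that the pair (b, α(b)) belongs to R, where α acts on Xᵏ componentwise. Then C has a pseudo-Siggers operation: a 6-ary s ∈ C and unary α, β ∈ C with α(s(x,y,x,z,y,z)) = β(s(y,x,z,x,z,y)) for all x, y, z ∈ X. -/
section Aux

variable {X : Type} {C : ∀ n : ℕ, Set ((Fin n → X) → X)}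

lemma inGroupOf_refl (hClone : IsClone C) : InGroupOf C (Equiv.refl X) :=
  ⟨hClone.proj 1 0, hClone.proj 1 0⟩

lemma inGroupOf_symm {g : Equiv.Perm X} (h : InGroupOf C g) : InGroupOf C g.symm :=
  ⟨h.2, by simpa using h.1⟩

lemma inGroupOf_trans (hClone : IsClone C) {g g' : Equiv.Perm X}
    (h : InGroupOf C g) (h' : InGroupOf C g') : InGroupOf C (g.trans g') := by
  constructor
  · have := hClone.comp (fun x : Fin 1 → X => g' (x 0))
      (fun _ => (fun x : Fin 1 → X => g (x 0))) h'.1 (fun _ => h.1)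
    simpa using this
  · have := hClone.comp (fun x : Fin 1 → X => g.symm (x 0))
      (fun _ => (fun x : Fin 1 → X => g'.symm (x 0))) h.2 (fun _ => h'.2)
    simpa using this

/-- Equivalence of tuples modulo the group of the clone. -/
def TupEq (C : ∀ n : ℕ, Set ((Fin n → X) → X)) (k : ℕ) (t t' : Fin k → X) : Prop :=
  ∃ g : Equiv.Perm X, InGroupOf C g ∧ ∀ i, g (t i) = t' i

lemma tupEq_refl (hClone : IsClone C) (k : ℕ) (t : Fin k → X) : TupEq C k t t :=
  ⟨Equiv.refl X, inGroupOf_refl hClone, fun _ => rfl⟩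

lemma tupEq_symm {k : ℕ} {t t' : Fin k → X} (h : TupEq C k t t') : TupEq C k t' t := by
  obtain ⟨g, hg, he⟩ := h
  exact ⟨g.symm, inGroupOf_symm hg, fun i => by rw [← he i]; simp⟩

lemma tupEq_trans (hClone : IsClone C) {k : ℕ} {t t' t'' : Fin k → X}
    (h : TupEq C k t t') (h' : TupEq C k t' t'') : TupEq C k t t'' := by
  obtain ⟨g, hg, he⟩ := h
  obtain ⟨g', hg', he'⟩ := h'
  exact ⟨g.trans g', inGroupOf_trans hClone hg hg', fun i => by simp [he i, he' i]⟩

end Aux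

section Limit
variable {X : Type} {C : ∀ n : ℕ, Set ((Fin n → X) → X)} {D : Type}

lemma pigeon (hClone : IsClone C) (hOlig : CloneOligomorphic C) (e : ℕ → D)
    (A : ℕ → Set (D → X)) (hA : ∀ {m n : ℕ}, m ≤ n → A n ⊆ A m)
    (k : ℕ) (Q : (D → X) → Prop) (hQ : ∀ m, ∃ p ∈ A m, Q p) :
    ∃ r : Fin k → X, ∀ m, ∃ p ∈ A m, Q p ∧ TupEq C k (fun i => p (e i.val)) r := by
  obtain ⟨S, hS⟩ := hOlig k
  by_contra h
  push_neg at h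
  choose m hm using h
  set M := S.sup m with hM
  obtain ⟨p, hp, hQp⟩ := hQ M
  obtain ⟨r₀, hr₀S, g, hg, hge⟩ := hS (fun i => p (e i.val))
  exact hm r₀ p (hA (Finset.le_sup hr₀S) hp) hQp (tupEq_symm ⟨g, hg, hge⟩)

/-- `r` is a `k`-tuple achievable (modulo the group) in every `A m`. -/
def GoodTup (C : ∀ n : ℕ, Set ((Fin n → X) → X)) (e : ℕ → D) (A : ℕ → Set (D → X))
    (k : ℕ) (r : Fin k → X) : Prop :=
  ∀ m, ∃ p ∈ A m, TupEq C k (fun i => p (e i.val)) r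

lemma goodTup_extend (hClone : IsClone C) (hOlig : CloneOligomorphic C) (e : ℕ → D)
    (A : ℕ → Set (D → X)) (hA : ∀ {m n : ℕ}, m ≤ n → A n ⊆ A m)
    {k : ℕ} {r : Fin k → X} (hr : GoodTup C e A k r) :
    ∃ r' : Fin (k + 1) → X, GoodTup C e A (k + 1) r' ∧ ∀ i : Fin k, r' i.castSucc = r i := by
  obtain ⟨r'', hr''⟩ := pigeon hClone hOlig e A hA (k + 1)
    (fun p => TupEq C k (fun i => p (e i.val)) r) hr
  obtain ⟨p₀, _, hQ₀, hT₀⟩ := hr'' 0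
  obtain ⟨g₁, hg₁, he₁⟩ := hQ₀
  obtain ⟨g₂, hg₂, he₂⟩ := hT₀
  refine ⟨fun i => g₁ (g₂.symm (r'' i)), ?_, ?_⟩
  · intro m
    obtain ⟨p, hp, _, hT⟩ := hr'' m
    refine ⟨p, hp, tupEq_trans hClone hT ⟨g₂.symm.trans g₁, inGroupOf_trans hClone
      (inGroupOf_symm hg₂) hg₁, fun i => rfl⟩⟩
  · intro i
    have h2 : g₂ (p₀ (e (i.castSucc).val)) = r'' i.castSucc := he₂ i.castSucc
    have h3 : g₂.symm (r'' i.castSucc) = p₀ (e i.val) := by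
      rw [← h2]; simp [Fin.coe_castSucc]
    show g₁ (g₂.symm (r'' i.castSucc)) = r i
    rw [h3]; exact he₁ i

noncomputable def buildTup (hClone : IsClone C) (hOlig : CloneOligomorphic C) (e : ℕ → D)
    (A : ℕ → Set (D → X)) (hA : ∀ {m n : ℕ}, m ≤ n → A n ⊆ A m)
    (hne : ∀ m, (A m).Nonempty) : (k : ℕ) → {r : Fin k → X // GoodTup C e A k r}
  | 0 => ⟨Fin.elim0, fun m => by
      obtain ⟨p, hp⟩ := hne m
      exact ⟨p, hp, Equiv.refl X, inGroupOf_refl hClone, fun i => i.elim0⟩⟩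
  | k + 1 =>
    ⟨(goodTup_extend hClone hOlig e A hA (buildTup hClone hOlig e A hA hne k).2).choose,
     (goodTup_extend hClone hOlig e A hA (buildTup hClone hOlig e A hA hne k).2).choose_spec.1⟩

lemma buildTup_coh (hClone : IsClone C) (hOlig : CloneOligomorphic C) (e : ℕ → D)
    (A : ℕ → Set (D → X)) (hA : ∀ {m n : ℕ}, m ≤ n → A n ⊆ A m)
    (hne : ∀ m, (A m).Nonempty) (k : ℕ) (i : Fin k) :
    (buildTup hClone hOlig e A hA hne (k + 1)).1 i.castSucc
      = (buildTup hClone hOlig e A hA hne k).1 i :=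
  (goodTup_extend hClone hOlig e A hA (buildTup hClone hOlig e A hA hne k).2).choose_spec.2 i

lemma buildTup_stable (hClone : IsClone C) (hOlig : CloneOligomorphic C) (e : ℕ → D)
    (A : ℕ → Set (D → X)) (hA : ∀ {m n : ℕ}, m ≤ n → A n ⊆ A m)
    (hne : ∀ m, (A m).Nonempty) (n k k' : ℕ) (h : n < k) (h' : k ≤ k') :
    (buildTup hClone hOlig e A hA hne k').1 ⟨n, lt_of_lt_of_le h h'⟩
      = (buildTup hClone hOlig e A hA hne k).1 ⟨n, h⟩ := by
  induction k', h' using Nat.le_induction with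
  | base => rfl
  | succ k' hk ih =>
      have hco := buildTup_coh hClone hOlig e A hA hne k' ⟨n, lt_of_lt_of_le h hk⟩
      have hcast : ((⟨n, lt_of_lt_of_le h hk⟩ : Fin k').castSucc)
          = (⟨n, lt_of_lt_of_le h (Nat.le_succ_of_le hk)⟩ : Fin (k' + 1)) := rfl
      rw [hcast] at hco
      rw [hco, ih]

lemma limit_lemma (hClone : IsClone C) (hOlig : CloneOligomorphic C)
    (e : ℕ → D) (he : Function.Surjective e)
    (A : ℕ → Set (D → X)) (hA : ∀ {m n : ℕ}, m ≤ n → A n ⊆ A m)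
    (hne : ∀ m, (A m).Nonempty)
    (hcl : ∀ m (g : Equiv.Perm X), InGroupOf C g → ∀ p ∈ A m, (fun d => g (p d)) ∈ A m) :
    ∃ f : D → X, ∀ (F : Finset D) (m : ℕ), ∃ p ∈ A m, ∀ d ∈ F, p d = f d := by
  classical
  set b := buildTup hClone hOlig e A hA hne with hb
  have hN : ∀ d : D, e ((he d).choose) = d := fun d => (he d).choose_spec
  set N : D → ℕ := fun d => (he d).choose with hNdef
  refine ⟨fun d => (b (N d + 1)).1 ⟨N d, Nat.lt_succ_self _⟩, ?_⟩
  intro F m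
  set K := F.sup (fun d => N d) + 1 with hK
  have hK' : ∀ d ∈ F, N d < K := fun d hd => Nat.lt_succ_of_le (Finset.le_sup hd)
  obtain ⟨p, hp, g, hg, hge⟩ := (b K).2 m
  refine ⟨fun d => g (p d), hcl m g hg p hp, ?_⟩
  intro d hd
  have h1 : g (p (e (N d))) = (b K).1 ⟨N d, hK' d hd⟩ := hge ⟨N d, hK' d hd⟩
  rw [hN d] at h1
  show g (p d) = (b (N d + 1)).1 ⟨N d, Nat.lt_succ_self _⟩
  rw [h1]
  exact buildTup_stable hClone hOlig e A hA hne (N d) (N d + 1) K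
    (Nat.lt_succ_self _) (hK' d hd)

end Limit

section Key
variable {X : Type}

def pat1 {X : Type} (x y z : X) : Fin 6 → X := ![x, y, x, z, y, z]
def pat2 {X : Type} (x y z : X) : Fin 6 → X := ![y, x, z, x, z, y]
def perm6 : Fin 6 → Fin 6 := ![1, 0, 3, 2, 5, 4]

lemma pat1_perm6 (x y z : X) (j : Fin 6) : pat1 x y z (perm6 j) = pat2 x y z j := by
  fin_cases j <;> rfl

lemma pat2_perm6 (x y z : X) (j : Fin 6) : pat2 x y z (perm6 j) = pat1 x y z j := by
  fin_cases j <;> rfl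

/-- Column matrices for a family of triples. -/
def Pmat {κ : ℕ} (w : Fin κ → X × X × X) : Fin 6 → Fin κ → X :=
  fun j i => pat1 (w i).1 (w i).2.1 (w i).2.2 j

def Qmat {κ : ℕ} (w : Fin κ → X × X × X) : Fin 6 → Fin κ → X :=
  fun j i => pat2 (w i).1 (w i).2.1 (w i).2.2 j

lemma key_finite {C : ∀ n : ℕ, Set ((Fin n → X) → X)} (hClone : IsClone C)
    (hyp : ∀ k : ℕ, 1 ≤ k → ∀ R : (Fin k → X) → (Fin k → X) → Prop,
      (∀ b c, R b c → R c b) →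
      (∀ (n : ℕ), ∀ f ∈ C n, ∀ b c : Fin n → Fin k → X,
        (∀ j, R (b j) (c j)) →
        R (fun i => f (fun j => b j i)) (fun i => f (fun j => c j i))) →
      (∃ a b c : Fin k → X, a ≠ b ∧ a ≠ c ∧ b ≠ c ∧ R a b ∧ R a c ∧ R b c) →
      ∃ (b : Fin k → X) (α : Equiv.Perm X), InGroupOf C α ∧ R b (fun i => α (b i)))
    {u v : X} (huv : u ≠ v) (κ : ℕ) (τ : Fin κ → X × X × X) :
    ∃ s ∈ C 6, ∃ a ∈ C 1, ∀ i : Fin κ,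
      a (fun _ => s (pat1 (τ i).1 (τ i).2.1 (τ i).2.2))
        = s (pat2 (τ i).1 (τ i).2.1 (τ i).2.2) := by
  classical
  set τ' : Fin (κ + 2) → X × X × X := Fin.append τ ![(u, v, v), (u, u, v)] with hτ'
  set R : (Fin (κ + 2) → X) → (Fin (κ + 2) → X) → Prop :=
    fun b c => ∃ s ∈ C 6, b = (fun i => s (fun j => Pmat τ' j i))
      ∧ c = (fun i => s (fun j => Qmat τ' j i)) with hR
  have hi0 : τ' (Fin.natAdd κ (0 : Fin 2)) = (u, v, v) := by
    rw [hτ', Fin.append_right]; rfl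
  have hi1 : τ' (Fin.natAdd κ (1 : Fin 2)) = (u, u, v) := by
    rw [hτ', Fin.append_right]; rfl
  have hiL : ∀ i : Fin κ, τ' (Fin.castAdd 2 i) = τ i := by
    intro i; rw [hτ', Fin.append_left]
  -- symmetry
  have hsym : ∀ b c, R b c → R c b := by
    rintro b c ⟨s, hs, rfl, rfl⟩
    refine ⟨fun w => s (fun j => w (perm6 j)),
      hClone.comp s (fun j => fun x => x (perm6 j)) hs (fun j => hClone.proj 6 (perm6 j)),
      ?_, ?_⟩
    · funext i
      exact congrArg s (funext fun j => (pat1_perm6 _ _ _ j).symm)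
    · funext i
      exact congrArg s (funext fun j => (pat2_perm6 _ _ _ j).symm)
  -- preservation
  have hpres : ∀ (n : ℕ), ∀ f ∈ C n, ∀ b c : Fin n → Fin (κ + 2) → X,
      (∀ j, R (b j) (c j)) →
      R (fun i => f (fun j => b j i)) (fun i => f (fun j => c j i)) := by
    intro n f hf b c hrel
    choose s hs h1 h2 using hrel
    refine ⟨fun w => f (fun j => s j w), hClone.comp f s hf hs, ?_, ?_⟩
    · funext i
      exact congrArg f (funext fun j => congrFun (h1 j) i)
    · funext i
      exact congrArg f (funext fun j => congrFun (h2 j) i)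
  -- triangle
  have htri : ∃ a b c : Fin (κ + 2) → X,
      a ≠ b ∧ a ≠ c ∧ b ≠ c ∧ R a b ∧ R a c ∧ R b c := by
    refine ⟨fun i => (τ' i).1, fun i => (τ' i).2.1, fun i => (τ' i).2.2, ?_, ?_, ?_, ?_, ?_, ?_⟩
    · intro h
      have := congrFun h (Fin.natAdd κ (0 : Fin 2))
      rw [hi0] at this
      exact huv this
    · intro h
      have := congrFun h (Fin.natAdd κ (0 : Fin 2))
      rw [hi0] at this
      exact huv this
    · intro h
      have := congrFun h (Fin.natAdd κ (1 : Fin 2))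
      rw [hi1] at this
      exact huv this
    · exact ⟨fun w => w 0, hClone.proj 6 0, rfl, rfl⟩
    · exact ⟨fun w => w 2, hClone.proj 6 2, rfl, rfl⟩
    · exact ⟨fun w => w 4, hClone.proj 6 4, rfl, rfl⟩
  obtain ⟨b, α, hα, s, hs, hb, hαb⟩ := hyp (κ + 2) (by omega) R hsym hpres htri
  refine ⟨s, hs, fun w : Fin 1 → X => α (w 0), hα.1, ?_⟩
  intro i
  have h2 : α (s (fun j => Pmat τ' j (Fin.castAdd 2 i)))
      = s (fun j => Qmat τ' j (Fin.castAdd 2 i)) := by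
    have h := congrFun hαb (Fin.castAdd 2 i)
    rw [hb] at h
    exact h
  have hP : (fun j => Pmat τ' j (Fin.castAdd 2 i)) = pat1 (τ i).1 (τ i).2.1 (τ i).2.2 := by
    funext j; rw [Pmat, hiL i]
  have hQ : (fun j => Qmat τ' j (Fin.castAdd 2 i)) = pat2 (τ i).1 (τ i).2.1 (τ i).2.2 := by
    funext j; rw [Qmat, hiL i]
  rw [hP, hQ] at h2
  exact h2

end Key

/-- Let `C` be a topologically closed oligomorphic function clone on a
countable set `X`. If every symmetric binary relation `R` on `Xᵏ` (`k ≥ 1`) which is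
preserved by `C` (as a `2k`-ary relation on `X`) and contains three pairwise distinct,
pairwise related elements has a pseudoloop with respect to the group of `C`,
then `C` has a pseudo-Siggers operation. -/
theorem statement4 {X : Type} [Countable X] (C : ∀ n : ℕ, Set ((Fin n → X) → X))
    (hClone : IsClone C) (hClosed : CloneClosed C) (hOlig : CloneOligomorphic C)
    (hyp : ∀ k : ℕ, 1 ≤ k → ∀ R : (Fin k → X) → (Fin k → X) → Prop,
      (∀ b c, R b c → R c b) →
      (∀ (n : ℕ), ∀ f ∈ C n, ∀ b c : Fin n → Fin k → X,
        (∀ j, R (b j) (c j)) →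
        R (fun i => f (fun j => b j i)) (fun i => f (fun j => c j i))) →
      (∃ a b c : Fin k → X, a ≠ b ∧ a ≠ c ∧ b ≠ c ∧ R a b ∧ R a c ∧ R b c) →
      ∃ (b : Fin k → X) (α : Equiv.Perm X), InGroupOf C α ∧ R b (fun i => α (b i))) :
    HasPseudoSiggers C := by
  classical
  by_cases hsub : Subsingleton X
  · exact ⟨fun w => w 0, hClone.proj 6 0, fun w => w 0, hClone.proj 1 0,
      fun w => w 0, hClone.proj 1 0, fun x y z => Subsingleton.elim _ _⟩
  rw [not_subsingleton_iff_nontrivial] at hsub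
  obtain ⟨u, v, huv⟩ := exists_pair_ne X
  haveI : Nonempty X := ⟨u⟩
  obtain ⟨eX6, heX6⟩ := exists_surjective_nat (Fin 6 → X)
  obtain ⟨t3, ht3⟩ := exists_surjective_nat (X × X × X)
  -- Step 1: build a limit 6-ary operation
  set A1 : ℕ → Set ((Fin 6 → X) → X) := fun m =>
    {s | s ∈ C 6 ∧ ∃ a ∈ C 1, ∃ b ∈ C 1, ∀ n < m,
      a (fun _ => s (pat1 (t3 n).1 (t3 n).2.1 (t3 n).2.2))
        = b (fun _ => s (pat2 (t3 n).1 (t3 n).2.1 (t3 n).2.2))} with hA1def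
  have hA1 : ∀ {m n : ℕ}, m ≤ n → A1 n ⊆ A1 m := by
    intro m n hmn s hsmem
    obtain ⟨hs, a, ha, b, hb, hid⟩ := hsmem
    exact ⟨hs, a, ha, b, hb, fun q hq => hid q (lt_of_lt_of_le hq hmn)⟩
  have hne1 : ∀ m, (A1 m).Nonempty := by
    intro m
    obtain ⟨s, hs, a, ha, hspec⟩ := key_finite hClone hyp huv m (fun i => t3 i.val)
    exact ⟨s, hs, a, ha, fun w => w 0, hClone.proj 1 0, fun n hn => hspec ⟨n, hn⟩⟩
  have hcl1 : ∀ m (g : Equiv.Perm X), InGroupOf C g → ∀ s ∈ A1 m,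
      (fun d => g (s d)) ∈ A1 m := by
    intro m g hg s hsmem
    obtain ⟨hs, a, ha, b, hb, hid⟩ := hsmem
    refine ⟨?_, fun w => a (fun _ => g.symm (w 0)), ?_, fun w => b (fun _ => g.symm (w 0)), ?_, ?_⟩
    · exact hClone.comp (fun x : Fin 1 → X => g (x 0)) (fun _ => s) hg.1 (fun _ => hs)
    · exact hClone.comp a (fun _ => (fun x : Fin 1 → X => g.symm (x 0))) ha (fun _ => hg.2)
    · exact hClone.comp b (fun _ => (fun x : Fin 1 → X => g.symm (x 0))) hb (fun _ => hg.2)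
    · intro n hn
      show a (fun _ => g.symm (g (s (pat1 (t3 n).1 (t3 n).2.1 (t3 n).2.2))))
        = b (fun _ => g.symm (g (s (pat2 (t3 n).1 (t3 n).2.1 (t3 n).2.2))))
      simp only [Equiv.symm_apply_apply]
      exact hid n hn
  obtain ⟨sh, hsh⟩ := limit_lemma hClone hOlig eX6 heX6 A1 hA1 hne1 hcl1
  have hshC : sh ∈ C 6 := by
    apply hClosed 6 sh
    intro F
    obtain ⟨p, hp, hagree⟩ := hsh F 0
    exact ⟨p, hp.1, hagree⟩
  have hstar : ∀ m : ℕ, ∃ a ∈ C 1, ∃ b ∈ C 1, ∀ n < m,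
      a (fun _ => sh (pat1 (t3 n).1 (t3 n).2.1 (t3 n).2.2))
        = b (fun _ => sh (pat2 (t3 n).1 (t3 n).2.1 (t3 n).2.2)) := by
    intro m
    set F : Finset (Fin 6 → X) :=
      ((Finset.range m).image (fun n => pat1 (t3 n).1 (t3 n).2.1 (t3 n).2.2))
        ∪ ((Finset.range m).image (fun n => pat2 (t3 n).1 (t3 n).2.1 (t3 n).2.2)) with hF
    obtain ⟨p, hp, hagree⟩ := hsh F m
    obtain ⟨hpC, a, ha, b, hb, hid⟩ := hp
    refine ⟨a, ha, b, hb, fun n hn => ?_⟩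
    have e1 : p (pat1 (t3 n).1 (t3 n).2.1 (t3 n).2.2)
        = sh (pat1 (t3 n).1 (t3 n).2.1 (t3 n).2.2) := by
      apply hagree
      rw [hF]
      exact Finset.mem_union_left _ (Finset.mem_image_of_mem _ (Finset.mem_range.mpr hn))
    have e2 : p (pat2 (t3 n).1 (t3 n).2.1 (t3 n).2.2)
        = sh (pat2 (t3 n).1 (t3 n).2.1 (t3 n).2.2) := by
      apply hagree
      rw [hF]
      exact Finset.mem_union_right _ (Finset.mem_image_of_mem _ (Finset.mem_range.mpr hn))
    rw [← e1, ← e2]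
    exact hid n hn
  -- Step 2: build limit unary operations
  obtain ⟨eXB, heXB⟩ := exists_surjective_nat (X × Bool)
  set A2 : ℕ → Set (X × Bool → X) := fun m =>
    {p | (fun w : Fin 1 → X => p (w 0, false)) ∈ C 1 ∧
      (fun w : Fin 1 → X => p (w 0, true)) ∈ C 1 ∧
      ∀ n < m, p (sh (pat1 (t3 n).1 (t3 n).2.1 (t3 n).2.2), false)
        = p (sh (pat2 (t3 n).1 (t3 n).2.1 (t3 n).2.2), true)} with hA2def
  have hA2 : ∀ {m n : ℕ}, m ≤ n → A2 n ⊆ A2 m := by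
    intro m n hmn p hpmem
    obtain ⟨h1, h2, hid⟩ := hpmem
    exact ⟨h1, h2, fun q hq => hid q (lt_of_lt_of_le hq hmn)⟩
  have hfix : ∀ (a : (Fin 1 → X) → X), (fun w : Fin 1 → X => a (fun _ => w 0)) = a := by
    intro a
    funext w
    exact congrArg a (funext fun i => congrArg w (Subsingleton.elim 0 i))
  have hne2 : ∀ m, (A2 m).Nonempty := by
    intro m
    obtain ⟨a, ha, b, hb, hid⟩ := hstar m
    refine ⟨fun q => cond q.2 (b (fun _ => q.1)) (a (fun _ => q.1)), ?_, ?_, ?_⟩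
    · show (fun w : Fin 1 → X => a (fun _ => w 0)) ∈ C 1
      rw [hfix a]; exact ha
    · show (fun w : Fin 1 → X => b (fun _ => w 0)) ∈ C 1
      rw [hfix b]; exact hb
    · intro n hn
      exact hid n hn
  have hcl2 : ∀ m (g : Equiv.Perm X), InGroupOf C g → ∀ p ∈ A2 m,
      (fun d => g (p d)) ∈ A2 m := by
    intro m g hg p hpmem
    obtain ⟨h1, h2, hid⟩ := hpmem
    refine ⟨?_, ?_, fun n hn => congrArg g (hid n hn)⟩
    · exact hClone.comp (fun x : Fin 1 → X => g (x 0))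
        (fun _ => (fun w : Fin 1 → X => p (w 0, false))) hg.1 (fun _ => h1)
    · exact hClone.comp (fun x : Fin 1 → X => g (x 0))
        (fun _ => (fun w : Fin 1 → X => p (w 0, true))) hg.1 (fun _ => h2)
  obtain ⟨ph, hph⟩ := limit_lemma hClone hOlig eXB heXB A2 hA2 hne2 hcl2
  have hαC : (fun w : Fin 1 → X => ph (w 0, false)) ∈ C 1 := by
    apply hClosed 1
    intro F
    obtain ⟨p, hp, hagree⟩ := hph (F.image (fun w => (w 0, false))) 0
    exact ⟨fun w => p (w 0, false), hp.1,
      fun w hw => hagree _ (Finset.mem_image_of_mem _ hw)⟩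
  have hβC : (fun w : Fin 1 → X => ph (w 0, true)) ∈ C 1 := by
    apply hClosed 1
    intro F
    obtain ⟨p, hp, hagree⟩ := hph (F.image (fun w => (w 0, true))) 0
    exact ⟨fun w => p (w 0, true), hp.2.1,
      fun w hw => hagree _ (Finset.mem_image_of_mem _ hw)⟩
  refine ⟨sh, hshC, fun w : Fin 1 → X => ph (w 0, false), hαC,
    fun w : Fin 1 → X => ph (w 0, true), hβC, ?_⟩
  intro x y z
  obtain ⟨n, hn⟩ := ht3 (x, y, z)
  obtain ⟨p, hp, hagree⟩ := hph {(sh (pat1 x y z), false), (sh (pat2 x y z), true)} (n + 1)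
  have hid : p (sh (pat1 (t3 n).1 (t3 n).2.1 (t3 n).2.2), false)
      = p (sh (pat2 (t3 n).1 (t3 n).2.1 (t3 n).2.2), true) := hp.2.2 n (Nat.lt_succ_self n)
  rw [hn] at hid
  have e1 : p (sh (pat1 x y z), false) = ph (sh (pat1 x y z), false) :=
    hagree _ (by simp)
  have e2 : p (sh (pat2 x y z), true) = ph (sh (pat2 x y z), true) :=
    hagree _ (by simp)
  show ph (sh (pat1 x y z), false) = ph (sh (pat2 x y z), true)
  rw [← e1, ← e2]
  exact hid
end

section
/- Let C be a topologically closed oligomorphic function clone on a countable set X, let n ≥ 1, and let (f_i)_{i∈ℕ} be a sequence of n-ary operations in C. Then there exist a strictly increasing sequence k₀ < k₁ < k₂ < ⋯ of natural numbers, members γ_i of the group of C, and an n-ary operation f ∈ C such that the sequence (γ_i ∘ f_{k_i}) converges pointwise to f; that is, for every t ∈ Xⁿ there is an index i₀ with γ_i(f_{k_i}(t)) = f(t) for all i ≥ i₀. -/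
section Statement9Aux

variable {X : Type} {C : ∀ n : ℕ, Set ((Fin n → X) → X)}

lemma one_inGroup (hClone : IsClone C) : InGroupOf C (1 : Equiv.Perm X) :=
  ⟨hClone.proj 1 0, hClone.proj 1 0⟩

lemma mul_inGroup (hClone : IsClone C) {g h : Equiv.Perm X}
    (hg : InGroupOf C g) (hh : InGroupOf C h) : InGroupOf C (g * h) := by
  constructor
  · have := hClone.comp (fun x : Fin 1 → X => g (x 0))
      (fun _ => fun x : Fin 1 → X => h (x 0)) hg.1 (fun _ => hh.1)
    simpa [Equiv.Perm.mul_apply] using this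
  · have := hClone.comp (fun x : Fin 1 → X => h.symm (x 0))
      (fun _ => fun x : Fin 1 → X => g.symm (x 0)) hh.2 (fun _ => hg.2)
    simpa [Equiv.Perm.mul_def] using this

lemma inv_inGroup {g : Equiv.Perm X} (hg : InGroupOf C g) : InGroupOf C g⁻¹ :=
  ⟨hg.2, hg.1⟩

end Statement9Aux

/-- In a topologically closed oligomorphic function clone on a countable
set, every sequence of `n`-ary operations admits a subsequence which, after composing with
suitable members of the group of the clone, converges pointwise to a member of the clone. -/
theorem statement9 {X : Type} [Countable X] (C : ∀ n : ℕ, Set ((Fin n → X) → X))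
    (hClone : IsClone C) (hClosed : CloneClosed C) (hOlig : CloneOligomorphic C)
    (n : ℕ) (hn : 1 ≤ n) (f : ℕ → (Fin n → X) → X) (hf : ∀ i, f i ∈ C n) :
    ∃ k : ℕ → ℕ, StrictMono k ∧
      ∃ γ : ℕ → Equiv.Perm X, (∀ i, InGroupOf C (γ i)) ∧
        ∃ g ∈ C n, ∀ t : Fin n → X, ∃ i₀ : ℕ, ∀ i ≥ i₀, γ i (f (k i) t) = g t := by
  rcases isEmpty_or_nonempty X with hX | hX
  · exact ⟨id, strictMono_id, fun _ => 1, fun _ => one_inGroup hClone,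
      fun x => x ⟨0, hn⟩, hClone.proj n ⟨0, hn⟩,
      fun t => (hX.false (t ⟨0, hn⟩)).elim⟩
  obtain ⟨e, he⟩ := exists_surjective_nat (Fin n → X)
  -- the key refinement step via oligomorphicity
  have key : ∀ m : ℕ, ∀ A : Set ℕ, A.Infinite →
      ∃ B : Set ℕ, B ⊆ A ∧ B.Infinite ∧ ∀ i ∈ B, ∀ i' ∈ B,
        ∃ g : Equiv.Perm X, InGroupOf C g ∧
          ∀ j : ℕ, j ≤ m → g (f i (e j)) = f i' (e j) := by
    intro m A hA
    obtain ⟨S, hS⟩ := hOlig (m + 1)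
    choose rep hrepS gp hgpGrp hgp using fun i : ℕ => hS (fun jj : Fin (m+1) => f i (e jj.1))
    haveI := hA.to_subtype
    obtain ⟨y, hy⟩ := Finite.exists_infinite_fiber
      (fun i : A => (⟨rep i.1, hrepS i.1⟩ : S))
    refine ⟨Subtype.val '' ((fun i : A => (⟨rep i.1, hrepS i.1⟩ : S)) ⁻¹' {y}), ?_, ?_, ?_⟩
    · rintro i ⟨b, -, rfl⟩; exact b.2
    · exact (Set.infinite_coe_iff.mp hy).image Subtype.val_injective.injOn
    · rintro i ⟨b, hb, rfl⟩ i' ⟨b', hb', rfl⟩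
      simp only [Set.mem_preimage, Set.mem_singleton_iff] at hb hb'
      have hrep : rep b.1 = rep b'.1 := congrArg Subtype.val (hb.trans hb'.symm)
      refine ⟨gp b'.1 * (gp b.1)⁻¹,
        mul_inGroup hClone (hgpGrp _) (inv_inGroup (hgpGrp _)), ?_⟩
      intro j hj
      have h1 := hgp b.1 ⟨j, Nat.lt_succ_of_le hj⟩
      have h2 := hgp b'.1 ⟨j, Nat.lt_succ_of_le hj⟩
      rw [Equiv.Perm.mul_apply, ← h1, Equiv.Perm.coe_inv, Equiv.symm_apply_apply, hrep]
      exact h2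
  choose Bf hBsub hBinf hBrel using key
  let As : ℕ → {A : Set ℕ // A.Infinite} := fun m => Nat.rec
    ⟨Bf 0 Set.univ Set.infinite_univ, hBinf 0 _ _⟩
    (fun m ih => ⟨Bf (m+1) ih.1 ih.2, hBinf (m+1) _ _⟩) m
  have hAs_succ : ∀ m, (As (m+1)).1 = Bf (m+1) (As m).1 (As m).2 := fun m => rfl
  have hAs_zero : (As 0).1 = Bf 0 Set.univ Set.infinite_univ := rfl
  have hAs_rel : ∀ m, ∀ i ∈ (As m).1, ∀ i' ∈ (As m).1,
      ∃ g : Equiv.Perm X, InGroupOf C g ∧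
        ∀ j : ℕ, j ≤ m → g (f i (e j)) = f i' (e j) := by
    intro m
    cases m with
    | zero => rw [hAs_zero]; exact hBrel 0 _ _
    | succ m => rw [hAs_succ]; exact hBrel (m+1) _ _
  have hAs_sub : ∀ m, (As (m+1)).1 ⊆ (As m).1 := by
    intro m; rw [hAs_succ]; exact hBsub (m+1) _ _
  have hgt : ∀ (m : ℕ) (c : ℕ), ∃ b ∈ (As m).1, c < b := fun m c => (As m).2.exists_gt c
  choose nxt hnxtmem hnxtlt using hgt
  let k : ℕ → ℕ := fun m => Nat.rec (nxt 0 0) (fun m ih => nxt (m+1) ih) m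
  have hk_succ : ∀ m, k (m+1) = nxt (m+1) (k m) := fun m => rfl
  have hk_mem : ∀ m, k m ∈ (As m).1 := by
    intro m; cases m with
    | zero => exact hnxtmem 0 0
    | succ m => rw [hk_succ]; exact hnxtmem (m+1) (k m)
  have hk_mono : StrictMono k := by
    apply strictMono_nat_of_lt_succ
    intro m; rw [hk_succ]; exact hnxtlt (m+1) (k m)
  have hk_rel : ∀ m, ∃ g : Equiv.Perm X, InGroupOf C g ∧
      ∀ j : ℕ, j ≤ m → g (f (k (m+1)) (e j)) = f (k m) (e j) :=
    fun m => hAs_rel m _ (hAs_sub m (hk_mem (m+1))) _ (hk_mem m)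
  choose eps hepsGrp hepseq using hk_rel
  let gam : ℕ → Equiv.Perm X := fun m => Nat.rec 1 (fun m ih => ih * eps m) m
  have hgam_succ : ∀ m, gam (m+1) = gam m * eps m := fun m => rfl
  have hgamGrp : ∀ m, InGroupOf C (gam m) := by
    intro m; induction m with
    | zero => exact one_inGroup hClone
    | succ m ih => rw [hgam_succ]; exact mul_inGroup hClone ih (hepsGrp m)
  set a : ℕ → X := fun j => gam j (f (k j) (e j)) with ha
  have hQ : ∀ m j, j ≤ m → gam m (f (k m) (e j)) = a j := by
    intro m
    induction m with
    | zero => intro j hj; obtain rfl := Nat.le_zero.mp hj; rfl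
    | succ m ih =>
      intro j hj
      rcases eq_or_lt_of_le hj with rfl | hjm
      · rfl
      · have hjm' : j ≤ m := Nat.lt_succ_iff.mp hjm
        rw [hgam_succ, Equiv.Perm.mul_apply, hepseq m j hjm', ih j hjm']
  choose idx hidx using he
  set g : (Fin n → X) → X := fun t => a (idx t) with hg
  have hgC : g ∈ C n := by
    apply hClosed n
    intro F
    refine ⟨fun x => gam (F.sup idx) (f (k (F.sup idx)) x), ?_, ?_⟩
    · exact hClone.comp (fun x : Fin 1 → X => gam (F.sup idx) (x 0))
        (fun _ => f (k (F.sup idx))) (hgamGrp _).1 (fun _ => hf _)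
    · intro t ht
      have h1 := hQ (F.sup idx) (idx t) (Finset.le_sup ht)
      rw [hidx t] at h1
      exact h1
  refine ⟨k, hk_mono, gam, hgamGrp, g, hgC, fun t => ⟨idx t, fun i hi => ?_⟩⟩
  have h1 := hQ i (idx t) hi
  rw [hidx t] at h1
  exact h1
end

section
/- Let G be a permutation group acting oligomorphically on a countable set X and let R be a symmetric binary relation on X invariant under G such that every R-edge is contained in an R-triangle (for all x, y with R(x,y) there is z with R(x,z) and R(y,z) and x, y, z pairwise distinct). For n ≥ 1, call x, y ∈ X n-diamond-connected (x ∼ₙ y) if there exist a₁, b₁, c₁, d₁, …, aₙ, bₙ, cₙ, dₙ ∈ X such that for every 1 ≤ i ≤ n both {aᵢ, bᵢ, cᵢ} and {bᵢ, cᵢ, dᵢ} are sets of three pairwise distinct, pairwise R-related elements, and x = a₁, dᵢ = a_{i+1} for 1 ≤ i < n, and dₙ = y; call x, y diamond-connected (x ∼ y) if x ∼ₙ y for some n ≥ 1. Then: (1) there exists N ≥ 1 such that for all x, y ∈ X, x ∼ y if and only if x ∼_N y; and (2) the relation ∼ is an equivalence relation on the support of R, i.e., on the set of elements contained in some R-edge.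 -/
section Aux

variable {X : Type} {R : X → X → Prop}

lemma tri_rot (hSym : ∀ x y, R x y → R y x) {a b c : X} (h : Triangle R a b c) :
    Triangle R b c a :=
  ⟨h.2.2.1, h.1.symm, h.2.1.symm, h.2.2.2.2.2, hSym _ _ h.2.2.2.1, hSym _ _ h.2.2.2.2.1⟩

lemma tri_inv {G : Subgroup (Equiv.Perm X)} (hInv : GGInvariant R G) {α : Equiv.Perm X}
    (hα : α ∈ G) {a b c : X} (h : Triangle R a b c) : Triangle R (α a) (α b) (α c) :=
  ⟨α.injective.ne h.1, α.injective.ne h.2.1, α.injective.ne h.2.2.1,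
   hInv α hα _ _ h.2.2.2.1, hInv α hα _ _ h.2.2.2.2.1, hInv α hα _ _ h.2.2.2.2.2⟩

lemma dc_inv {G : Subgroup (Equiv.Perm X)} (hInv : GGInvariant R G) {α : Equiv.Perm X}
    (hα : α ∈ G) {n : ℕ} {x y : X} (h : DiamondConn R n x y) :
    DiamondConn R n (α x) (α y) := by
  obtain ⟨a, b, c, d, ht, ha, hc, hd⟩ := h
  refine ⟨fun i => α (a i), fun i => α (b i), fun i => α (c i), fun i => α (d i),
    fun i hi => ⟨tri_inv hInv hα (ht i hi).1, tri_inv hInv hα (ht i hi).2⟩,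
    by show α (a 0) = α x; rw [ha],
    fun i hi => by show α (d i) = α (a (i+1)); rw [hc i hi],
    by show α (d (n-1)) = α y; rw [hd]⟩

lemma dc_trans' {m n : ℕ} {x y z : X} (hm : 1 ≤ m) (hn : 1 ≤ n)
    (h1 : DiamondConn R m x y) (h2 : DiamondConn R n y z) :
    DiamondConn R (m + n) x z := by
  obtain ⟨a1, b1, c1, d1, ht1, ha1, hc1, hd1⟩ := h1
  obtain ⟨a2, b2, c2, d2, ht2, ha2, hc2, hd2⟩ := h2
  refine ⟨fun i => if i < m then a1 i else a2 (i - m),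
          fun i => if i < m then b1 i else b2 (i - m),
          fun i => if i < m then c1 i else c2 (i - m),
          fun i => if i < m then d1 i else d2 (i - m), ?_, ?_, ?_, ?_⟩
  · intro i hi
    by_cases h : i < m
    · simp only [if_pos h]; exact ht1 i h
    · simp only [if_neg h]; exact ht2 (i - m) (by omega)
  · simp only [if_pos (show 0 < m by omega)]; exact ha1
  · intro i hi
    by_cases h' : i + 1 < m
    · simp only [if_pos (show i < m by omega), if_pos h']
      exact hc1 i h'
    · by_cases h'' : i < m
      · simp only [if_pos h'', if_neg h']
        rw [show i = m - 1 by omega, hd1, show m - 1 + 1 - m = 0 by omega, ha2]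
      · simp only [if_neg h'', if_neg h']
        rw [show i + 1 - m = i - m + 1 by omega]
        exact hc2 (i - m) (by omega)
  · simp only [if_neg (show ¬ m + n - 1 < m by omega)]
    rw [show m + n - 1 - m = n - 1 by omega]
    exact hd2

lemma dc_symm' (hSym : ∀ x y, R x y → R y x) {n : ℕ} {x y : X} (hn : 1 ≤ n)
    (h : DiamondConn R n x y) : DiamondConn R n y x := by
  obtain ⟨a, b, c, d, ht, ha, hc, hd⟩ := h
  refine ⟨fun i => d (n - 1 - i), fun i => b (n - 1 - i), fun i => c (n - 1 - i),
          fun i => a (n - 1 - i), ?_, ?_, ?_, ?_⟩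
  · intro i hi
    obtain ⟨t1, t2⟩ := ht (n - 1 - i) (by omega)
    exact ⟨tri_rot hSym (tri_rot hSym t2), tri_rot hSym t1⟩
  · show d (n - 1 - 0) = y
    rw [show n - 1 - 0 = n - 1 by omega]; exact hd
  · intro i hi
    show a (n - 1 - i) = d (n - 1 - (i + 1))
    rw [show n - 1 - i = n - 1 - (i + 1) + 1 by omega]
    exact (hc (n - 1 - (i + 1)) (by omega)).symm
  · show a (n - 1 - (n - 1)) = x
    rw [show n - 1 - (n - 1) = 0 by omega]; exact ha

lemma dc_step (hSym : ∀ x y, R x y → R y x) {n : ℕ} {x y : X} (hn : 1 ≤ n)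
    (h : DiamondConn R n x y) : DiamondConn R (n + 1) x y := by
  have h0 := h
  obtain ⟨a, b, c, d, ht, ha, hc, hd⟩ := h
  have hlast := (ht (n - 1) (by omega)).2
  rw [hd] at hlast
  have loop : DiamondConn R 1 y y :=
    ⟨fun _ => y, fun _ => b (n - 1), fun _ => c (n - 1), fun _ => y,
     fun i _ => ⟨tri_rot hSym (tri_rot hSym hlast), hlast⟩, rfl,
     fun i hi => absurd hi (by omega), rfl⟩
  exact dc_trans' hn le_rfl h0 loop

lemma dc_mono (hSym : ∀ x y, R x y → R y x) {n m : ℕ} {x y : X} (hn : 1 ≤ n)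
    (hnm : n ≤ m) (h : DiamondConn R n x y) : DiamondConn R m x y := by
  induction m, hnm using Nat.le_induction with
  | base => exact h
  | succ m hm ih => exact dc_step hSym (le_trans hn hm) ih

end Aux

/-- Let `G` act oligomorphically on a countable set `X` and let `R` be a
`G`-invariant symmetric relation every edge of which lies in a triangle. Then
diamond-connectedness `∼` equals `∼_N` for some `N ≥ 1`, and `∼` is an equivalence
relation on the support of `R` (reflexive on the support, symmetric, transitive). -/
theorem statement10 {X : Type} [Countable X] (G : Subgroup (Equiv.Perm X)) (R : X → X → Prop)
    (hOlig : GroupOligomorphic G) (hSym : ∀ x y, R x y → R y x) (hInv : GGInvariant R G)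
    (hTri : ∀ x y, R x y → ∃ z, Triangle R x y z) :
    (∃ N : ℕ, 1 ≤ N ∧ ∀ x y : X,
        (∃ n, 1 ≤ n ∧ DiamondConn R n x y) ↔ DiamondConn R N x y) ∧
    (∀ x ∈ Support R, ∃ n, 1 ≤ n ∧ DiamondConn R n x x) ∧
    (∀ x y, (∃ n, 1 ≤ n ∧ DiamondConn R n x y) → ∃ n, 1 ≤ n ∧ DiamondConn R n y x) ∧
    (∀ x y z, (∃ n, 1 ≤ n ∧ DiamondConn R n x y) → (∃ n, 1 ≤ n ∧ DiamondConn R n y z) →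
      ∃ n, 1 ≤ n ∧ DiamondConn R n x z) := by
  classical
  obtain ⟨S, hS⟩ := hOlig 2
  have refl : ∀ x ∈ Support R, ∃ n, 1 ≤ n ∧ DiamondConn R n x x := by
    rintro x ⟨y, hxy⟩
    obtain ⟨z, htri⟩ := hTri x y hxy
    exact ⟨1, le_rfl,
      ⟨fun _ => x, fun _ => y, fun _ => z, fun _ => x,
       fun i _ => ⟨htri, tri_rot hSym htri⟩, rfl,
       fun i hi => absurd hi (by omega), rfl⟩⟩
  refine ⟨?_, refl, ?_, ?_⟩
  · set f : (Fin 2 → X) → ℕ := fun t =>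
      if h : ∃ n, 1 ≤ n ∧ DiamondConn R n (t 0) (t 1) then h.choose else 1 with hf_def
    have hf : ∀ t, (∃ n, 1 ≤ n ∧ DiamondConn R n (t 0) (t 1)) →
        1 ≤ f t ∧ DiamondConn R (f t) (t 0) (t 1) := by
      intro t h
      simp only [hf_def, dif_pos h]
      exact h.choose_spec
    refine ⟨S.sup f + 1, by omega, fun x y => ⟨?_, fun h => ⟨_, by omega, h⟩⟩⟩
    rintro ⟨n, hn, hxy⟩
    obtain ⟨t', ht'S, α, hαG, hα⟩ := hS ![x, y]
    have h0 : α (t' 0) = x := by simpa using hα 0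
    have h1 : α (t' 1) = y := by simpa using hα 1
    have hinv := dc_inv hInv (inv_mem hαG) hxy
    have e0 : (α⁻¹ : Equiv.Perm X) x = t' 0 := by rw [← h0]; simp
    have e1 : (α⁻¹ : Equiv.Perm X) y = t' 1 := by rw [← h1]; simp
    rw [e0, e1] at hinv
    have hft := hf t' ⟨n, hn, hinv⟩
    have hNle : f t' ≤ S.sup f + 1 := le_trans (Finset.le_sup ht'S) (by omega)
    have hmono := dc_mono hSym hft.1 hNle hft.2
    have hfin := dc_inv hInv hαG hmono
    rwa [h0, h1] at hfin
  · rintro x y ⟨n, hn, h⟩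
    exact ⟨n, hn, dc_symm' hSym hn h⟩
  · rintro x y z ⟨m, hm, h1⟩ ⟨n, hn, h2⟩
    exact ⟨m + n, by omega, dc_trans' hm hn h1 h2⟩
end
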